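/- Let σ > 0 and c : ℝ → ℝ continuous with c strictly decreasing on (-∞,0), strictly increasing on (0,∞). Let a* < 0 < b* satisfy λ* := c(a*) = c(b*), and let v ∈ C²(ℝ) satisfy (σ²(x)/2)·v''(x) = λ* - c(x) on (a*, b*), v''(x) = 0 outside [a*, b*] (v linear there), with v'(a*) = -q_u, v'(b*) = q_d where q_u, q_d ≥ 0. Then v is convex on ℝ and -q_u ≤ v'(x) ≤ q_d for all x ∈ ℝ. -/

import Mathlib

open Real

theorem stmt13 (σ c : ℝ → ℝ)
    (hσcont : Continuous σ) (hσpos : ∀ x, 0 < σ x)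
    (hccont : Continuous c)
    (hcanti : StrictAntiOn c (Set.Iio 0)) (hcmono : StrictMonoOn c (Set.Ioi 0))
    (astar bstar lamstar qu qd : ℝ)
    (ha : astar < 0) (hb : 0 < bstar)
    (hqu : 0 ≤ qu) (hqd : 0 ≤ qd)
    (hlam : lamstar = c astar) (hlam' : c astar = c bstar)
    (v : ℝ → ℝ) (hv : ContDiff ℝ 2 v)
    (hode : ∀ x ∈ Set.Ioo astar bstar,
      (σ x ^ 2 / 2) * deriv (deriv v) x = lamstar - c x)
    (hlin : ∀ x, x < astar ∨ bstar < x → deriv (deriv v) x = 0)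
    (hva : deriv v astar = -qu) (hvb : deriv v bstar = qd) :
    ConvexOn ℝ Set.univ v ∧ ∀ x : ℝ, -qu ≤ deriv v x ∧ deriv v x ≤ qd := by
  -- regularity facts
  have hv2 : ContDiff ℝ ((1 : WithTop ℕ∞) + 1) v := by
    rw [one_add_one_eq_two]; exact hv
  obtain ⟨hdv, -, h1⟩ := contDiff_succ_iff_deriv.mp hv2
  have hdv' : Differentiable ℝ (deriv v) := h1.differentiable one_ne_zero
  have h2c : Continuous (deriv (deriv v)) := h1.continuous_deriv le_rfl
  -- c x ≤ lamstar on (astar, bstar)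
  have hcle : ∀ x ∈ Set.Ioo astar bstar, c x ≤ lamstar := by
    intro x hx
    rcases lt_trichotomy x 0 with hx0 | hx0 | hx0
    · rw [hlam]
      exact le_of_lt (hcanti (Set.mem_Iio.mpr ha) (Set.mem_Iio.mpr hx0) hx.1)
    · subst hx0
      have hev : ∀ᶠ t in nhdsWithin (0:ℝ) (Set.Iio 0), c t ≤ lamstar := by
        filter_upwards [self_mem_nhdsWithin,
          ((eventually_gt_nhds ha).filter_mono nhdsWithin_le_nhds)] with t ht1 ht2
        rw [hlam]
        exact le_of_lt (hcanti (Set.mem_Iio.mpr ha) ht1 ht2)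
      exact le_of_tendsto (hccont.continuousAt.continuousWithinAt.tendsto) hev
    · rw [hlam, hlam']
      exact le_of_lt (hcmono (Set.mem_Ioi.mpr hx0) (Set.mem_Ioi.mpr hb) hx.2)
  -- v'' vanishes at the boundary points
  have ha0 : deriv (deriv v) astar = 0 := by
    have hA : Filter.Tendsto (deriv (deriv v)) (nhdsWithin astar (Set.Iio astar))
        (nhds (deriv (deriv v) astar)) :=
      (h2c.tendsto astar).mono_left nhdsWithin_le_nhds
    have hB : Filter.Tendsto (deriv (deriv v)) (nhdsWithin astar (Set.Iio astar)) (nhds 0) := by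
      apply Filter.Tendsto.congr' _ tendsto_const_nhds
      filter_upwards [self_mem_nhdsWithin] with t ht
      exact (hlin t (Or.inl ht)).symm
    exact tendsto_nhds_unique hA hB
  have hb0 : deriv (deriv v) bstar = 0 := by
    have hA : Filter.Tendsto (deriv (deriv v)) (nhdsWithin bstar (Set.Ioi bstar))
        (nhds (deriv (deriv v) bstar)) :=
      (h2c.tendsto bstar).mono_left nhdsWithin_le_nhds
    have hB : Filter.Tendsto (deriv (deriv v)) (nhdsWithin bstar (Set.Ioi bstar)) (nhds 0) := by
      apply Filter.Tendsto.congr' _ tendsto_const_nhds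
      filter_upwards [self_mem_nhdsWithin] with t ht
      exact (hlin t (Or.inr ht)).symm
    exact tendsto_nhds_unique hA hB
  -- v'' ≥ 0 everywhere
  have hvpp : ∀ x, 0 ≤ deriv (deriv v) x := by
    intro x
    rcases lt_trichotomy x astar with h | h | h
    · rw [hlin x (Or.inl h)]
    · subst h; rw [ha0]
    · rcases lt_trichotomy x bstar with h' | h' | h'
      · have hx : x ∈ Set.Ioo astar bstar := ⟨h, h'⟩
        have hO := hode x hx
        have hc := hcle x hx
        have hσ2 : 0 < σ x ^ 2 / 2 := div_pos (pow_pos (hσpos x) 2) two_pos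
        have hD : deriv (deriv v) x = (lamstar - c x) / (σ x ^ 2 / 2) :=
          (eq_div_iff hσ2.ne').mpr ((mul_comm _ _).trans hO)
        rw [hD]
        exact div_nonneg (by linarith) hσ2.le
      · subst h'; rw [hb0]
      · rw [hlin x (Or.inr h')]
  -- convexity
  have hconv : ConvexOn ℝ Set.univ v := by
    apply convexOn_univ_of_deriv2_nonneg hdv hdv'
    intro x
    simpa [Function.iterate_succ, Function.comp] using hvpp x
  -- monotonicity of v'
  have hmono : Monotone (deriv v) := monotone_of_deriv_nonneg hdv' hvpp
  -- v' is constant left of astar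
  have hconstL : ∀ x, x ≤ astar → deriv v x = -qu := by
    intro x hx
    rcases eq_or_lt_of_le hx with rfl | hx
    · exact hva
    have hzero : ∀ t ∈ interior (Set.Icc x astar), deriv (deriv v) t = 0 := by
      intro t ht
      rw [interior_Icc] at ht
      exact hlin t (Or.inl ht.2)
    have hm : MonotoneOn (deriv v) (Set.Icc x astar) :=
      monotoneOn_of_deriv_nonneg (convex_Icc x astar) hdv'.continuous.continuousOn
        (hdv'.differentiableOn) (fun t ht => (hzero t ht).ge)
    have hanti : AntitoneOn (deriv v) (Set.Icc x astar) :=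
      antitoneOn_of_deriv_nonpos (convex_Icc x astar) hdv'.continuous.continuousOn
        (hdv'.differentiableOn) (fun t ht => (hzero t ht).le)
    have hxm : x ∈ Set.Icc x astar := Set.left_mem_Icc.mpr hx.le
    have ham : astar ∈ Set.Icc x astar := Set.right_mem_Icc.mpr hx.le
    have := le_antisymm (hm hxm ham hx.le) (hanti hxm ham hx.le)
    rw [this, hva]
  -- v' is constant right of bstar
  have hconstR : ∀ x, bstar ≤ x → deriv v x = qd := by
    intro x hx
    rcases eq_or_lt_of_le hx with rfl | hx
    · exact hvb
    have hzero : ∀ t ∈ interior (Set.Icc bstar x), deriv (deriv v) t = 0 := by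
      intro t ht
      rw [interior_Icc] at ht
      exact hlin t (Or.inr ht.1)
    have hm : MonotoneOn (deriv v) (Set.Icc bstar x) :=
      monotoneOn_of_deriv_nonneg (convex_Icc bstar x) hdv'.continuous.continuousOn
        (hdv'.differentiableOn) (fun t ht => (hzero t ht).ge)
    have hanti : AntitoneOn (deriv v) (Set.Icc bstar x) :=
      antitoneOn_of_deriv_nonpos (convex_Icc bstar x) hdv'.continuous.continuousOn
        (hdv'.differentiableOn) (fun t ht => (hzero t ht).le)
    have hbm : bstar ∈ Set.Icc bstar x := Set.left_mem_Icc.mpr hx.le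
    have hxm : x ∈ Set.Icc bstar x := Set.right_mem_Icc.mpr hx.le
    have := le_antisymm (hm hbm hxm hx.le) (hanti hbm hxm hx.le)
    rw [← this, hvb]
  refine ⟨hconv, fun x => ⟨?_, ?_⟩⟩
  · rcases le_or_gt x astar with h | h
    · rw [hconstL x h]
    · rw [← hva]; exact hmono h.le
  · rcases le_or_gt bstar x with h | h
    · rw [hconstR x h]
    · rw [← hvb]; exact hmono h.le
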